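/- arXiv:1702.04416 — 2 statements merged into one kernel-verified Lean document; each statement's English description precedes it below -/
import Mathlib

section
/- Let Γ be the free group on two generators a and b, and let ℤΓ = MonoidAlgebra ℤ Γ be its integral group ring. The map (ℤΓ) × (ℤΓ) → ℤΓ sending (x, y) to x·(a − 1) + y·(b − 1) (where a, b denote the images in ℤΓ of the two free generators, and 1 is the identity of ℤΓ) is an injective homomorphism of left ℤΓ-modules. -/
open MonoidAlgebra

set_option maxHeartbeats 1000000

noncomputable section FoxAux

abbrev RG := MonoidAlgebra ℤ (FreeGroup (Fin 2))

abbrev ofg : FreeGroup (Fin 2) →* RG := MonoidAlgebra.of ℤ (FreeGroup (Fin 2))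

/-- Matrix for generator `i` in the Fox derivative w.r.t. generator `j`. -/
def foxUnit (j i : Fin 2) : (Matrix (Fin 2) (Fin 2) RG)ˣ where
  val := !![ofg (FreeGroup.of i), if i = j then 1 else 0; 0, 1]
  inv := !![ofg (FreeGroup.of i)⁻¹, -(ofg (FreeGroup.of i)⁻¹ * if i = j then 1 else 0); 0, 1]
  val_inv := by
    have h : ofg (FreeGroup.of i) * ofg (FreeGroup.of i)⁻¹ = 1 := by
      rw [← map_mul, mul_inv_cancel, map_one]
    rw [Matrix.mul_fin_two, Matrix.one_fin_two]
    ext k l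
    fin_cases k <;> fin_cases l <;>
      simp [mul_neg, ← mul_assoc, h, MonoidAlgebra.one_def]
  inv_val := by
    have h : ofg (FreeGroup.of i)⁻¹ * ofg (FreeGroup.of i) = 1 := by
      rw [← map_mul, inv_mul_cancel, map_one]
    rw [Matrix.mul_fin_two, Matrix.one_fin_two]
    ext k l
    fin_cases k <;> fin_cases l <;>
      simp [mul_neg, ← mul_assoc, h, MonoidAlgebra.one_def]

def foxHom (j : Fin 2) : FreeGroup (Fin 2) →* (Matrix (Fin 2) (Fin 2) RG)ˣ :=
  FreeGroup.lift (foxUnit j)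

/-- Fox derivative of a group element. -/
def foxd (j : Fin 2) (g : FreeGroup (Fin 2)) : RG := (foxHom j g).val 0 1

lemma foxHom_val (j : Fin 2) (g : FreeGroup (Fin 2)) :
    (foxHom j g).val = !![ofg g, foxd j g; 0, 1] := by
  suffices h : ∃ m, (foxHom j g).val = !![ofg g, m; 0, 1] by
    obtain ⟨m, hm⟩ := h
    have : foxd j g = m := by rw [foxd, hm]; simp
    rw [hm, this]
  induction g with
  | C1 =>
    refine ⟨0, ?_⟩
    rw [map_one, Units.val_one, Matrix.one_fin_two, map_one]
  | of x =>
    refine ⟨if x = j then 1 else 0, ?_⟩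
    show (FreeGroup.lift (foxUnit j) (FreeGroup.of x)).val = _
    rw [FreeGroup.lift_apply_of]
    rfl
  | inv_of x _ =>
    refine ⟨-(ofg (FreeGroup.of x)⁻¹ * if x = j then 1 else 0), ?_⟩
    rw [map_inv]
    have hv : foxHom j (FreeGroup.of x) = foxUnit j x := FreeGroup.lift_apply_of
    rw [hv]
    rfl
  | mul x y hx hy =>
    obtain ⟨m, hm⟩ := hx
    obtain ⟨n, hn⟩ := hy
    refine ⟨ofg x * n + m, ?_⟩
    rw [map_mul, Units.val_mul, hm, hn, Matrix.mul_fin_two, map_mul]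
    congr 1
    simp

lemma foxd_mul (j : Fin 2) (g h : FreeGroup (Fin 2)) :
    foxd j (g * h) = ofg g * foxd j h + foxd j g := by
  have h2 := foxHom_val j (g * h)
  rw [map_mul, Units.val_mul, foxHom_val j g, foxHom_val j h, Matrix.mul_fin_two] at h2
  have h3 := congrFun (congrFun h2 0) 1
  simp only [foxd] at h3 ⊢
  rw [foxHom_val j (g * h)] at h3 ⊢
  simpa using h3.symm

lemma foxd_of (j i : Fin 2) : foxd j (FreeGroup.of i) = if i = j then 1 else 0 := by
  have hv : foxHom j (FreeGroup.of i) = foxUnit j i := by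
    show FreeGroup.lift (foxUnit j) (FreeGroup.of i) = _
    rw [FreeGroup.lift_apply_of]
  rw [foxd, hv]
  rfl

/-- Fox derivative as a `ℤ`-linear map on the group ring. -/
def Fox (j : Fin 2) : RG →ₗ[ℤ] RG := Finsupp.linearCombination ℤ (foxd j) ∘ₗ (MonoidAlgebra.coeffLinearEquiv ℤ).toLinearMap

lemma Fox_key (j i : Fin 2) (x : RG) :
    Fox j (x * (ofg (FreeGroup.of i) - 1)) = if i = j then x else 0 := by
  induction x using MonoidAlgebra.induction_linear with
  | zero => simp
  | add f g hf hg =>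
    rw [add_mul, map_add, hf, hg]
    split <;> simp
  | single g c =>
    change Fox j (MonoidAlgebra.single g c * (ofg (FreeGroup.of i) - 1))
      = if i = j then MonoidAlgebra.single g c else 0
    rw [mul_sub, mul_one]
    have h1 : MonoidAlgebra.single g c * ofg (FreeGroup.of i)
        = MonoidAlgebra.single (g * FreeGroup.of i) c := by
      show MonoidAlgebra.single g c * MonoidAlgebra.single (FreeGroup.of i) 1 = _
      rw [MonoidAlgebra.single_mul_single, mul_one]
    have h2 : ∀ (h : FreeGroup (Fin 2)), Fox j (MonoidAlgebra.single h c) = c • foxd j h :=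
      fun h => Finsupp.linearCombination_single (R := ℤ) (v := foxd j) c h
    rw [h1, map_sub, h2, h2, foxd_mul, foxd_of]
    have hx : c • ofg g = MonoidAlgebra.single g c := by
      show c • MonoidAlgebra.single g (1 : ℤ) = _
      rw [MonoidAlgebra.smul_single', mul_one]
    split
    · rw [smul_add, mul_one]
      rw [add_sub_cancel_right, hx]
    · rw [mul_zero, zero_add, sub_self]

end FoxAux

/-- For `Γ = F₂` the free group on generators `a, b`, the map
`(x, y) ↦ x(a-1) + y(b-1)` is an injective homomorphism of left `ℤΓ`-modules
`(ℤΓ)² → ℤΓ`. -/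
theorem free_group_resolution_injective :
    ∃ f : (MonoidAlgebra ℤ (FreeGroup (Fin 2)) × MonoidAlgebra ℤ (FreeGroup (Fin 2)))
        →ₗ[MonoidAlgebra ℤ (FreeGroup (Fin 2))] MonoidAlgebra ℤ (FreeGroup (Fin 2)),
      (∀ x y : MonoidAlgebra ℤ (FreeGroup (Fin 2)),
        f (x, y) = x * (MonoidAlgebra.of ℤ (FreeGroup (Fin 2)) (FreeGroup.of 0) - 1)
          + y * (MonoidAlgebra.of ℤ (FreeGroup (Fin 2)) (FreeGroup.of 1) - 1)) ∧
      Function.Injective f := by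
  classical
  set a : RG := ofg (FreeGroup.of 0) with ha
  set b : RG := ofg (FreeGroup.of 1) with hb
  refine ⟨{ toFun := fun p => p.1 * (a - 1) + p.2 * (b - 1)
            map_add' := by intro p q; simp only [Prod.fst_add, Prod.snd_add, add_mul]; abel
            map_smul' := by
              intro r p
              simp [smul_eq_mul, mul_assoc, mul_add] }, fun x y => rfl, ?_⟩
  intro p q hpq
  simp only [LinearMap.coe_mk, AddHom.coe_mk] at hpq
  have key : ∀ x y : RG, Fox 0 (x * (a - 1) + y * (b - 1)) = x ∧
      Fox 1 (x * (a - 1) + y * (b - 1)) = y := by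
    intro x y
    constructor
    · rw [map_add, ha, hb, Fox_key, Fox_key]; simp
    · rw [map_add, ha, hb, Fox_key, Fox_key]; simp
  have h0 := (key p.1 p.2).1
  have h1 := (key p.1 p.2).2
  have h0' := (key q.1 q.2).1
  have h1' := (key q.1 q.2).2
  rw [hpq] at h0 h1
  exact Prod.ext (h0 ▸ h0') (h1 ▸ h1')
end

section
/- Let Γ be the free group on two generators a and b, let ℤΓ = MonoidAlgebra ℤ Γ be its integral group ring, and let ε : ℤΓ → ℤ be the augmentation ring homomorphism sending every group element to 1. Then the kernel of ε, viewed as a left ℤΓ-submodule of ℤΓ, is a free left ℤΓ-module of rank 2 with basis (a − 1, b − 1). -/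
open MonoidAlgebra

namespace AugKerAux

abbrev Γ : Type := FreeGroup (Fin 2)
abbrev R : Type := MonoidAlgebra ℤ Γ
abbrev M : Type := R × R

noncomputable def σ : Γ →* Rˣ :=
  (Units.map (of ℤ Γ : Γ →* R)).comp toUnits.toMonoidHom

@[simp] lemma σ_coe (g : Γ) : (σ g : R) = of ℤ Γ g := rfl

def addAutToMulAut (A : Type*) [AddZeroClass A] : Multiplicative (AddAut A) →* MulAut (Multiplicative A) where
  toFun e := AddEquiv.toMultiplicative e.toAdd
  map_one' := rfl
  map_mul' _ _ := rfl

noncomputable def φ : Γ →* MulAut (Multiplicative M) :=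
  (addAutToMulAut M).comp ((DistribMulAction.toAddAut Rˣ M).comp σ)

lemma φ_apply (g : Γ) (m : Multiplicative M) :
    Multiplicative.toAdd (φ g m) =
      (of ℤ Γ g * (Multiplicative.toAdd m).1, of ℤ Γ g * (Multiplicative.toAdd m).2) := rfl

noncomputable def f : Γ →* Multiplicative M ⋊[φ] Γ :=
  FreeGroup.lift fun i =>
    ⟨Multiplicative.ofAdd (if i = 0 then ((1 : R), (0 : R)) else (0, 1)), FreeGroup.of i⟩

lemma f_right (g : Γ) : (f g).right = g := by
  have h : (SemidirectProduct.rightHom.comp f) = MonoidHom.id Γ := by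
    apply FreeGroup.ext_hom
    intro a
    simp [f, FreeGroup.lift_apply_of, SemidirectProduct.rightHom]
  exact DFunLike.congr_fun h g

noncomputable def d (g : Γ) : M := Multiplicative.toAdd (f g).left

lemma d_one : d 1 = 0 := by simp [d]

lemma d_mul (g h : Γ) :
    d (g * h) = d g + (of ℤ Γ g * (d h).1, of ℤ Γ g * (d h).2) := by
  have : f (g * h) = f g * f h := map_mul f g h
  unfold d
  rw [this, SemidirectProduct.mul_left, toAdd_mul, f_right, φ_apply]

lemma d_of (i : Fin 2) :
    d (FreeGroup.of i) = if i = 0 then ((1 : R), (0 : R)) else (0, 1) := by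
  simp [d, f, FreeGroup.lift_apply_of]

lemma d_inv (g : Γ) :
    d g⁻¹ = (-(of ℤ Γ g⁻¹ * (d g).1), -(of ℤ Γ g⁻¹ * (d g).2)) := by
  have h := d_mul g⁻¹ g
  rw [inv_mul_cancel, d_one] at h
  have h1 : d g⁻¹ = -(of ℤ Γ g⁻¹ * (d g).1, of ℤ Γ g⁻¹ * (d g).2) := by
    rw [eq_neg_iff_add_eq_zero]; exact h.symm
  rw [h1]; rfl

lemma ofinv_mul (g : Γ) : of ℤ Γ g⁻¹ * of ℤ Γ g = 1 := by
  rw [← map_mul, inv_mul_cancel, map_one]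

lemma key_one :
    of ℤ Γ (1 : Γ) - 1 = (d 1).1 * (of ℤ Γ (FreeGroup.of 0) - 1)
      + (d 1).2 * (of ℤ Γ (FreeGroup.of 1) - 1) := by
  simp [d_one, MonoidAlgebra.one_def]

lemma key_inv (g : Γ)
    (ih : of ℤ Γ g - 1 = (d g).1 * (of ℤ Γ (FreeGroup.of 0) - 1)
      + (d g).2 * (of ℤ Γ (FreeGroup.of 1) - 1)) :
    of ℤ Γ g⁻¹ - 1 = (d g⁻¹).1 * (of ℤ Γ (FreeGroup.of 0) - 1)
      + (d g⁻¹).2 * (of ℤ Γ (FreeGroup.of 1) - 1) := by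
  have hv := ofinv_mul g
  have h1 : of ℤ Γ g⁻¹ - 1 = -(of ℤ Γ g⁻¹ * (of ℤ Γ g - 1)) := by
    rw [mul_sub, hv, mul_one, neg_sub]
  rw [d_inv, h1, ih]
  simp only []
  noncomm_ring

lemma key_mul (x y : Γ)
    (ihx : of ℤ Γ x - 1 = (d x).1 * (of ℤ Γ (FreeGroup.of 0) - 1)
      + (d x).2 * (of ℤ Γ (FreeGroup.of 1) - 1))
    (ihy : of ℤ Γ y - 1 = (d y).1 * (of ℤ Γ (FreeGroup.of 0) - 1)
      + (d y).2 * (of ℤ Γ (FreeGroup.of 1) - 1)) :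
    of ℤ Γ (x * y) - 1 = (d (x * y)).1 * (of ℤ Γ (FreeGroup.of 0) - 1)
      + (d (x * y)).2 * (of ℤ Γ (FreeGroup.of 1) - 1) := by
  rw [map_mul, d_mul]
  simp only [Prod.fst_add, Prod.snd_add]
  have h1 : of ℤ Γ x * of ℤ Γ y - 1
      = (of ℤ Γ x - 1) + of ℤ Γ x * (of ℤ Γ y - 1) := by noncomm_ring
  rw [h1, ihx, ihy]
  noncomm_ring

lemma key (g : Γ) :
    of ℤ Γ g - 1 = (d g).1 * (of ℤ Γ (FreeGroup.of 0) - 1)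
      + (d g).2 * (of ℤ Γ (FreeGroup.of 1) - 1) := by
  induction g using FreeGroup.induction_on with
  | C1 => exact key_one
  | of i =>
    rcases Fin.exists_fin_two.mp ⟨i, rfl⟩ with h | h <;> subst h <;>
      simp [show (pure : Fin 2 → Γ) = FreeGroup.of from rfl, d_of]
  | inv_of x ih => exact key_inv (FreeGroup.of x) ih
  | mul x y ihx ihy => exact key_mul x y ihx ihy

noncomputable def D : R →ₗ[ℤ] M := (Finsupp.lift M ℤ Γ d).comp (coeffLinearEquiv ℤ).toLinearMap

lemma D_of (g : Γ) : D (of ℤ Γ g) = d g := by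
  show (Finsupp.lift M ℤ Γ d) (Finsupp.single g 1) = d g
  rw [Finsupp.lift_apply, Finsupp.sum_single_index (by simp), one_smul]

lemma main (ε : MonoidAlgebra ℤ Γ →+* ℤ) (hε : ∀ g : Γ, ε (of ℤ Γ g) = 1) (z : R) :
    z = (D z).1 * (of ℤ Γ (FreeGroup.of 0) - 1)
      + (D z).2 * (of ℤ Γ (FreeGroup.of 1) - 1) + ε z • (1 : R) := by
  induction z using MonoidAlgebra.induction_on with
  | of g =>
    rw [D_of, hε, one_smul]
    exact eq_add_of_sub_eq (key g)
  | add p q hp hq =>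
    rw [map_add, map_add, Prod.fst_add, Prod.snd_add, add_mul, add_mul, add_smul]
    conv_lhs => rw [hp, hq]
    abel
  | smul r p hp =>
    rw [map_smul, map_zsmul, Prod.smul_fst, Prod.smul_snd, smul_mul_assoc,
      smul_mul_assoc, smul_assoc]
    conv_lhs => rw [hp]
    rw [smul_add, smul_add]

lemma Dmul (g : Γ) (x : R) :
    D (x * (of ℤ Γ g - 1)) = (x * (d g).1, x * (d g).2) := by
  induction x using MonoidAlgebra.induction_on with
  | of h =>
    rw [mul_sub, mul_one, ← map_mul, map_sub, D_of, D_of, d_mul]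
    ext <;> simp
  | add p q hp hq =>
    rw [add_mul, map_add, hp, hq]
    ext <;> simp [add_mul]
  | smul r p hp =>
    rw [smul_mul_assoc, map_smul, hp]
    apply Prod.ext <;> simp [smul_mul_assoc, mul_assoc]

lemma inj (x y : R)
    (h : x * (of ℤ Γ (FreeGroup.of 0) - 1) + y * (of ℤ Γ (FreeGroup.of 1) - 1) = 0) :
    x = 0 ∧ y = 0 := by
  have h2 := congrArg D h
  rw [map_add, Dmul, Dmul, map_zero, d_of, d_of] at h2
  norm_num [Prod.ext_iff] at h2
  exact h2

end AugKerAux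
open AugKerAux

/-- For `Γ = F₂` the free group on generators `a, b`, the kernel of the augmentation
ring homomorphism `ε : ℤΓ → ℤ`, viewed as a left `ℤΓ`-submodule of `ℤΓ`, is a free
left `ℤΓ`-module of rank 2 with basis `(a - 1, b - 1)`. -/
theorem augmentation_ker_free_basis
    (ε : MonoidAlgebra ℤ (FreeGroup (Fin 2)) →+* ℤ)
    (hε : ∀ g : FreeGroup (Fin 2), ε (MonoidAlgebra.of ℤ (FreeGroup (Fin 2)) g) = 1) :
    ∃ bas : Module.Basis (Fin 2) (MonoidAlgebra ℤ (FreeGroup (Fin 2))) (RingHom.ker ε),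
      ((bas 0 : RingHom.ker ε) : MonoidAlgebra ℤ (FreeGroup (Fin 2)))
          = MonoidAlgebra.of ℤ (FreeGroup (Fin 2)) (FreeGroup.of 0) - 1 ∧
      ((bas 1 : RingHom.ker ε) : MonoidAlgebra ℤ (FreeGroup (Fin 2)))
          = MonoidAlgebra.of ℤ (FreeGroup (Fin 2)) (FreeGroup.of 1) - 1 := by
  classical
  set A : R := of ℤ Γ (FreeGroup.of 0) with hA
  set B : R := of ℤ Γ (FreeGroup.of 1) with hB
  have hεA : ε (A - 1) = 0 := by rw [map_sub, hε, map_one, sub_self]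
  have hεB : ε (B - 1) = 0 := by rw [map_sub, hε, map_one, sub_self]
  let T : (Fin 2 → R) →ₗ[R] R :=
    { toFun := fun v => v 0 * (A - 1) + v 1 * (B - 1)
      map_add' := by intro v w; simp [add_mul]; abel
      map_smul' := by intro c v; simp [smul_eq_mul, mul_add, mul_assoc] }
  have hT : ∀ v, T v ∈ RingHom.ker ε := by
    intro v
    simp only [T, LinearMap.coe_mk, AddHom.coe_mk, RingHom.mem_ker, map_add, map_mul,
      hεA, hεB, mul_zero, add_zero]
  let T' : (Fin 2 → R) →ₗ[R] (RingHom.ker ε) := T.codRestrict (RingHom.ker ε) hT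
  have hinj : Function.Injective T' := by
    intro v w hvw
    have h0 : T (v - w) = 0 := by
      have : T v = T w := congrArg Subtype.val hvw
      rw [map_sub, this, sub_self]
    have h1 := inj ((v - w) 0) ((v - w) 1) h0
    have h2 : v - w = 0 := by
      funext i
      rcases Fin.exists_fin_two.mp ⟨i, rfl⟩ with h | h <;> subst h
      · exact h1.1
      · exact h1.2
    exact sub_eq_zero.mp h2
  have hsurj : Function.Surjective T' := by
    rintro ⟨z, hz⟩
    rw [RingHom.mem_ker] at hz
    refine ⟨![(D z).1, (D z).2], ?_⟩
    apply Subtype.ext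
    show T ![(D z).1, (D z).2] = z
    have hm := main ε hε z
    rw [hz, zero_smul, add_zero] at hm
    simp only [T, LinearMap.coe_mk, AddHom.coe_mk, Matrix.cons_val_zero, Matrix.cons_val_one,
      Matrix.head_cons]
    exact hm.symm
  let e : (Fin 2 → R) ≃ₗ[R] (RingHom.ker ε) := LinearEquiv.ofBijective T' ⟨hinj, hsurj⟩
  refine ⟨(Pi.basisFun R (Fin 2)).map e, ?_, ?_⟩ <;>
  · rw [Module.Basis.map_apply]
    show ((T' _ : RingHom.ker ε) : R) = _
    show T _ = _
    simp [T, Pi.basisFun_apply, Pi.single_apply]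
end
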